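/- Let (V,E) be a directed tree and λ, μ weights on V. The following are equivalent: (i) B_λ is a bounded operator on ℓ^∞(V,μ); (ii) B_λ is a bounded operator on c₀(V,μ); (iii) sup_{v∈V} |μ_v| ∑_{u∈Chi(v)} |λ_u/μ_u| < ∞. In that case ‖B_λ‖ equals this supremum on both spaces. -/

import Mathlib

open scoped ENNReal
open Filter

/-- Iterated parent map of a partially defined parent function. -/
def parIter {V : Type*} (par : V → Option V) : ℕ → V → Option V
  | 0, v => some v
  | n + 1, v => (par v).bind (parIter par n)

/-- A directed tree: each vertex has at most one parent (the map `par`),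
the graph is connected (any two vertices have a common ancestor), and has no cycles. -/
structure DirTree (V : Type*) : Type _ where
  par : V → Option V
  connected : ∀ u v : V, ∃ m n : ℕ, ∃ w : V,
    parIter par m u = some w ∧ parIter par n v = some w
  acyclic : ∀ (v : V) (n : ℕ), parIter par (n + 1) v ≠ some v

namespace DirTree

variable {V : Type*} (t : DirTree V)

/-- The set of children of a vertex. -/
def children (v : V) : Set V := {u | t.par u = some v}

/-- `desc n v` is `Chi^n(v)`, the set of `n`-th generation descendants of `v`. -/
def desc (n : ℕ) (v : V) : Set V := {u | parIter t.par n u = some v}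

def IsRoot (v : V) : Prop := t.par v = none

def Rooted : Prop := ∃ v, t.IsRoot v

def Unrooted : Prop := ∀ v : V, t.par v ≠ none

/-- The tree has no leaves: every vertex has a child. -/
def Leafless : Prop := ∀ v : V, ∃ u, t.par u = some v

variable {𝕂 : Type*} [RCLike 𝕂]

/-- The weighted backward shift `B_λ`: `(B_λ f)(v) = ∑_{u ∈ Chi(v)} λ_u f(u)`. -/
noncomputable def bshift (lam : V → 𝕂) (f : V → 𝕂) : V → 𝕂 :=
  fun v => ∑' u : t.children v, lam u * f u

/-- The weighted forward shift `S_λ`: `(S_λ f)(v) = λ_v f(par v)` for `v ≠ root`, `0` at the root. -/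
noncomputable def fshift (lam : V → 𝕂) (f : V → 𝕂) : V → 𝕂 :=
  fun v => (t.par v).elim 0 (fun w => lam v * f w)

/-- `wprod lam n u = λ(par^n(u) → u)`, the product of the weights along the branch
from `par^n(u)` down to `u`. -/
noncomputable def wprod (lam : V → 𝕂) (n : ℕ) (u : V) : 𝕂 :=
  ∏ k ∈ Finset.range n, ((parIter t.par k u).elim 1 lam)

end DirTree

/-- The `ℓ^p(V,μ)`-norm (with values in `ℝ≥0∞`): for `p = ∞` the weighted sup norm,
otherwise `(∑_v ‖f(v) μ_v‖^p)^{1/p}`. -/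
noncomputable def enormW {V 𝕂 : Type*} [RCLike 𝕂] (μ : V → 𝕂) (p : ℝ≥0∞) (f : V → 𝕂) :
    ℝ≥0∞ :=
  if p = ∞ then ⨆ v, (‖μ v * f v‖₊ : ℝ≥0∞)
  else (∑' v, (‖μ v * f v‖₊ : ℝ≥0∞) ^ p.toReal) ^ (1 / p.toReal)

/-- Membership in `ℓ^p(V,μ)`. -/
def MemWLp {V 𝕂 : Type*} [RCLike 𝕂] (μ : V → 𝕂) (p : ℝ≥0∞) (f : V → 𝕂) : Prop :=
  enormW μ p f ≠ ∞

/-- Membership in `c₀(V,μ)`: the weighted function vanishes at infinity. -/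
def MemC0 {V 𝕂 : Type*} [RCLike 𝕂] (μ : V → 𝕂) (f : V → 𝕂) : Prop :=
  Tendsto (fun v => ‖μ v * f v‖) cofinite (nhds 0)

/-- `T` is a bounded operator with respect to the norm `nrm`. -/
def BoundedOn {V 𝕂 : Type*} [RCLike 𝕂] (T : (V → 𝕂) → (V → 𝕂))
    (nrm : (V → 𝕂) → ℝ≥0∞) : Prop :=
  ∃ C : ℝ≥0∞, C ≠ ∞ ∧ ∀ f, nrm (T f) ≤ C * nrm f

/-- The operator norm of `T` with respect to the norm `nrm`. -/
noncomputable def opNorm {V 𝕂 : Type*} [RCLike 𝕂] (T : (V → 𝕂) → (V → 𝕂))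
    (nrm : (V → 𝕂) → ℝ≥0∞) : ℝ≥0∞ :=
  sInf {C : ℝ≥0∞ | ∀ f, nrm (T f) ≤ C * nrm f}

/-- `T` is hypercyclic on the space `{f | mem f}` with metric induced by `nrm`:
some `f` in the space has dense orbit. -/
def HypercyclicOn {V 𝕂 : Type*} [RCLike 𝕂] (T : (V → 𝕂) → (V → 𝕂))
    (mem : (V → 𝕂) → Prop) (nrm : (V → 𝕂) → ℝ≥0∞) : Prop :=
  ∃ f, mem f ∧ ∀ g, mem g → ∀ ε : ℝ≥0∞, 0 < ε → ∃ n : ℕ, nrm (T^[n] f - g) < ε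

/-- `T` is weakly mixing: `T ⊕ T` is hypercyclic on the product. -/
def WeaklyMixingOn {V 𝕂 : Type*} [RCLike 𝕂] (T : (V → 𝕂) → (V → 𝕂))
    (mem : (V → 𝕂) → Prop) (nrm : (V → 𝕂) → ℝ≥0∞) : Prop :=
  ∃ f₁ f₂, mem f₁ ∧ mem f₂ ∧ ∀ g₁ g₂, mem g₁ → mem g₂ → ∀ ε : ℝ≥0∞, 0 < ε →
    ∃ n : ℕ, nrm (T^[n] f₁ - g₁) < ε ∧ nrm (T^[n] f₂ - g₂) < ε

/-- `T` is (topologically) mixing on the space `{f | mem f}`. -/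
def MixingOn {V 𝕂 : Type*} [RCLike 𝕂] (T : (V → 𝕂) → (V → 𝕂))
    (mem : (V → 𝕂) → Prop) (nrm : (V → 𝕂) → ℝ≥0∞) : Prop :=
  ∀ f g, mem f → mem g → ∀ ε : ℝ≥0∞, 0 < ε →
    ∃ N : ℕ, ∀ n ≥ N, ∃ h, mem h ∧ nrm (h - f) < ε ∧ nrm (T^[n] h - g) < ε


/-- `B_λ` is a bounded operator on `c₀(V,μ)`. -/
def BoundedOnC0 {V 𝕂 : Type*} [RCLike 𝕂] (μ : V → 𝕂)
    (T : (V → 𝕂) → (V → 𝕂)) : Prop :=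
  (∀ f, MemC0 μ f → MemC0 μ (T f)) ∧
  ∃ C : ℝ≥0∞, C ≠ ∞ ∧ ∀ f, MemC0 μ f → enormW μ ∞ (T f) ≤ C * enormW μ ∞ f

/-- The operator norm of `T` as an operator on `c₀(V,μ)`. -/
noncomputable def opNormC0 {V 𝕂 : Type*} [RCLike 𝕂] (μ : V → 𝕂)
    (T : (V → 𝕂) → (V → 𝕂)) : ℝ≥0∞ :=
  sInf {C : ℝ≥0∞ | ∀ f, MemC0 μ f → enormW μ ∞ (T f) ≤ C * enormW μ ∞ f}

section Stmt6Aux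
open scoped Classical NNReal
variable {V : Type*} {𝕂 : Type*} [RCLike 𝕂]

lemma stmt6_enormW_top (μ : V → 𝕂) (f : V → 𝕂) :
    enormW μ ∞ f = ⨆ v, (‖μ v * f v‖₊ : ℝ≥0∞) := if_pos rfl

lemma stmt6_nnnorm_tsum_le {ι : Type*} {g : ι → 𝕂} :
    (‖∑' i, g i‖₊ : ℝ≥0∞) ≤ ∑' i, (‖g i‖₊ : ℝ≥0∞) := by
  by_cases h : Summable (fun i => (‖g i‖₊ : ℝ≥0))
  · rw [← ENNReal.coe_tsum h]
    exact_mod_cast nnnorm_tsum_le h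
  · have : ∑' i, (‖g i‖₊ : ℝ≥0∞) = ∞ := by
      by_contra hc
      exact h (ENNReal.tsum_coe_ne_top_iff_summable.1 hc)
    simp [this]

/-- Key pointwise inequality. -/
lemma stmt6_key (t : DirTree V) (lam μ : V → 𝕂) (hμ : ∀ v, μ v ≠ 0) (f : V → 𝕂) (v : V)
    (b : ℝ≥0∞) (hb : ∀ u ∈ t.children v, (‖μ u * f u‖₊ : ℝ≥0∞) ≤ b) :
    (‖μ v * t.bshift lam f v‖₊ : ℝ≥0∞) ≤
      ((‖μ v‖₊ : ℝ≥0∞) * ∑' u : t.children v,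
        (‖lam u.1‖₊ : ℝ≥0∞) * (‖μ u.1‖₊ : ℝ≥0∞)⁻¹) * b := by
  have step1 : (‖μ v * t.bshift lam f v‖₊ : ℝ≥0∞) ≤
      (‖μ v‖₊ : ℝ≥0∞) * ∑' u : t.children v, (‖lam u.1 * f u.1‖₊ : ℝ≥0∞) := by
    rw [nnnorm_mul, ENNReal.coe_mul]
    exact mul_le_mul_right stmt6_nnnorm_tsum_le _
  refine step1.trans ?_
  have step2 : ∀ u : t.children v, (‖lam u.1 * f u.1‖₊ : ℝ≥0∞) ≤
      (‖lam u.1‖₊ : ℝ≥0∞) * (‖μ u.1‖₊ : ℝ≥0∞)⁻¹ * b := by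
    intro u
    have hb0 : (‖μ u.1‖₊ : ℝ≥0∞) ≠ 0 := by simpa using hμ u.1
    have key : (‖lam u.1 * f u.1‖₊ : ℝ≥0∞) =
        (‖lam u.1‖₊ : ℝ≥0∞) * (‖μ u.1‖₊ : ℝ≥0∞)⁻¹ * (‖μ u.1 * f u.1‖₊ : ℝ≥0∞) := by
      rw [nnnorm_mul, nnnorm_mul, ENNReal.coe_mul, ENNReal.coe_mul, mul_assoc,
        ← mul_assoc ((‖μ u.1‖₊ : ℝ≥0∞))⁻¹, ENNReal.inv_mul_cancel hb0 ENNReal.coe_ne_top,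
        one_mul]
    rw [key]
    exact mul_le_mul_right (hb u.1 u.2) _
  calc (‖μ v‖₊ : ℝ≥0∞) * ∑' u : t.children v, (‖lam u.1 * f u.1‖₊ : ℝ≥0∞)
      ≤ (‖μ v‖₊ : ℝ≥0∞) * ∑' u : t.children v,
          (‖lam u.1‖₊ : ℝ≥0∞) * (‖μ u.1‖₊ : ℝ≥0∞)⁻¹ * b :=
        mul_le_mul_right (ENNReal.tsum_le_tsum step2) _
    _ = _ := by rw [ENNReal.tsum_mul_right, mul_assoc]

/-- Global bound: `‖B f‖ ≤ M ‖f‖` (in `ℝ≥0∞`, valid even when `M = ∞`). -/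
lemma stmt6_bound_all (t : DirTree V) (lam μ : V → 𝕂) (hμ : ∀ v, μ v ≠ 0) (f : V → 𝕂) :
    enormW μ ∞ (t.bshift lam f) ≤
      (⨆ v : V, (‖μ v‖₊ : ℝ≥0∞) *
        ∑' u : t.children v, (‖lam u.1‖₊ : ℝ≥0∞) * (‖μ u.1‖₊ : ℝ≥0∞)⁻¹) * enormW μ ∞ f := by
  rw [stmt6_enormW_top, stmt6_enormW_top]
  refine iSup_le fun v => ?_
  refine (stmt6_key t lam μ hμ f v _ fun u _ => le_iSup (fun w => (‖μ w * f w‖₊ : ℝ≥0∞)) u).trans ?_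
  exact mul_le_mul_left (le_iSup (fun v => (‖μ v‖₊ : ℝ≥0∞) *
    ∑' u : t.children v, (‖lam u.1‖₊ : ℝ≥0∞) * (‖μ u.1‖₊ : ℝ≥0∞)⁻¹) v) _

/-- The finitely supported test function. -/
noncomputable def stmt6_testf (t : DirTree V) (lam μ : V → 𝕂) (v : V)
    (F : Finset ↥(t.children v)) : V → 𝕂 :=
  fun u => if h : ∃ hu : u ∈ t.children v, (⟨u, hu⟩ : ↥(t.children v)) ∈ F then
    (‖μ u‖ : 𝕂)⁻¹ * ((‖lam u‖ : 𝕂)⁻¹ * (starRingEnd 𝕂) (lam u)) else 0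

lemma stmt6_testf_memC0 (t : DirTree V) (lam μ : V → 𝕂) (v : V)
    (F : Finset ↥(t.children v)) : MemC0 μ (stmt6_testf t lam μ v F) := by
  have hsupp : {u | stmt6_testf t lam μ v F u ≠ 0} ⊆
      (fun x : ↥(t.children v) => x.1) '' (F : Set ↥(t.children v)) := by
    intro u hu
    by_contra hcon
    apply hu
    apply dif_neg
    rintro ⟨hu1, hu2⟩
    exact hcon ⟨⟨u, hu1⟩, hu2, rfl⟩
  have hfin : {u | stmt6_testf t lam μ v F u ≠ 0}.Finite :=
    (F.finite_toSet.image _).subset hsupp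
  have hev : ∀ᶠ u in cofinite, (0 : ℝ) = ‖μ u * stmt6_testf t lam μ v F u‖ := by
    filter_upwards [hfin.compl_mem_cofinite] with u hu
    simp only [Set.mem_compl_iff, Set.mem_setOf_eq, not_not] at hu
    simp [hu]
  exact Filter.Tendsto.congr' hev tendsto_const_nhds

lemma stmt6_testf_norm_le (t : DirTree V) (lam μ : V → 𝕂)
    (hlam : ∀ v, lam v ≠ 0) (hμ : ∀ v, μ v ≠ 0) (v : V)
    (F : Finset ↥(t.children v)) : enormW μ ∞ (stmt6_testf t lam μ v F) ≤ 1 := by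
  rw [stmt6_enormW_top]
  refine iSup_le fun u => ?_
  unfold stmt6_testf
  by_cases h : ∃ hu : u ∈ t.children v, (⟨u, hu⟩ : ↥(t.children v)) ∈ F
  · rw [dif_pos h]
    have hl' : (‖lam u‖ : ℝ) ≠ 0 := norm_ne_zero_iff.2 (hlam u)
    have hm' : (‖μ u‖ : ℝ) ≠ 0 := norm_ne_zero_iff.2 (hμ u)
    have h1 : ‖μ u * ((‖μ u‖ : 𝕂)⁻¹ * ((‖lam u‖ : 𝕂)⁻¹ * (starRingEnd 𝕂) (lam u)))‖ = 1 := by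
      simp [norm_mul, norm_inv, RCLike.norm_ofReal, abs_of_nonneg (norm_nonneg _)]
      field_simp
    rw [← enorm_eq_nnnorm, ← ofReal_norm, h1, ENNReal.ofReal_one]
  · rw [dif_neg h]
    simp

lemma stmt6_lam_mul_testf (lam μ : V → 𝕂) (u : V) (hl : lam u ≠ 0) (hm : μ u ≠ 0) :
    lam u * ((‖μ u‖ : 𝕂)⁻¹ * ((‖lam u‖ : 𝕂)⁻¹ * (starRingEnd 𝕂) (lam u)))
      = ((‖lam u‖ * ‖μ u‖⁻¹ : ℝ) : 𝕂) := by
  have hl' : (‖lam u‖ : ℝ) ≠ 0 := norm_ne_zero_iff.2 hl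
  have hm' : (‖μ u‖ : ℝ) ≠ 0 := norm_ne_zero_iff.2 hm
  field_simp
  ring_nf
  rw [RCLike.mul_conj]
  norm_cast
  field_simp

/-- Any `C` bounding `B` on `c₀` dominates the supremum `M`. -/
lemma stmt6_M_le (t : DirTree V) (lam μ : V → 𝕂)
    (hlam : ∀ v, lam v ≠ 0) (hμ : ∀ v, μ v ≠ 0) (C : ℝ≥0∞)
    (hC : ∀ f, MemC0 μ f → enormW μ ∞ (t.bshift lam f) ≤ C * enormW μ ∞ f) :
    (⨆ v : V, (‖μ v‖₊ : ℝ≥0∞) *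
      ∑' u : t.children v, (‖lam u.1‖₊ : ℝ≥0∞) * (‖μ u.1‖₊ : ℝ≥0∞)⁻¹) ≤ C := by
  refine iSup_le fun v => ?_
  rw [ENNReal.tsum_eq_iSup_sum, ENNReal.mul_iSup]
  refine iSup_le fun F => ?_
  set g := stmt6_testf t lam μ v F with hg
  have hBg : t.bshift lam g v = ∑ u ∈ F, ((‖lam u.1‖ * ‖μ u.1‖⁻¹ : ℝ) : 𝕂) := by
    unfold DirTree.bshift
    rw [tsum_eq_sum (s := F) ?_]
    · refine Finset.sum_congr rfl fun u hu => ?_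
      have hgu : g u.1 = (‖μ u.1‖ : 𝕂)⁻¹ * ((‖lam u.1‖ : 𝕂)⁻¹ * (starRingEnd 𝕂) (lam u.1)) :=
        dif_pos ⟨u.2, by rwa [Subtype.coe_eta]⟩
      rw [hgu, stmt6_lam_mul_testf lam μ u.1 (hlam u.1) (hμ u.1)]
    · intro u hu
      have hgu : g u.1 = 0 := by
        apply dif_neg
        rintro ⟨hu1, hu2⟩
        exact hu (by rwa [Subtype.coe_eta] at hu2)
      rw [hgu, mul_zero]
  have hnn : ∀ u : ↥(t.children v), (0:ℝ) ≤ ‖lam u.1‖ * ‖μ u.1‖⁻¹ := by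
    intro u; positivity
  have hkey : (‖μ v‖₊ : ℝ≥0∞) * ∑ u ∈ F, (‖lam u.1‖₊ : ℝ≥0∞) * (‖μ u.1‖₊ : ℝ≥0∞)⁻¹
      = (‖μ v * t.bshift lam g v‖₊ : ℝ≥0∞) := by
    rw [hBg, nnnorm_mul, ENNReal.coe_mul]
    congr 1
    rw [← enorm_eq_nnnorm (∑ u ∈ F, ((‖lam u.1‖ * ‖μ u.1‖⁻¹ : ℝ) : 𝕂)), ← ofReal_norm]
    have hsum : ∑ u ∈ F, ((‖lam u.1‖ * ‖μ u.1‖⁻¹ : ℝ) : 𝕂)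
        = ((∑ u ∈ F, ‖lam u.1‖ * ‖μ u.1‖⁻¹ : ℝ) : 𝕂) := by push_cast; ring
    rw [hsum, RCLike.norm_ofReal,
      abs_of_nonneg (Finset.sum_nonneg fun u _ => hnn u),
      ENNReal.ofReal_sum_of_nonneg fun u _ => hnn u]
    refine (Finset.sum_congr rfl fun u _ => ?_).symm
    rw [ENNReal.ofReal_mul (norm_nonneg _),
      ENNReal.ofReal_inv_of_pos (norm_pos_iff.2 (hμ u.1)),
      ofReal_norm, ofReal_norm, enorm_eq_nnnorm, enorm_eq_nnnorm]
  rw [hkey]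
  calc (‖μ v * t.bshift lam g v‖₊ : ℝ≥0∞)
      ≤ enormW μ ∞ (t.bshift lam g) := by
        rw [stmt6_enormW_top]; exact le_iSup (fun w => (‖μ w * t.bshift lam g w‖₊ : ℝ≥0∞)) v
    _ ≤ C * enormW μ ∞ g := hC g (stmt6_testf_memC0 t lam μ v F)
    _ ≤ C * 1 := mul_le_mul_right (stmt6_testf_norm_le t lam μ hlam hμ v F) C
    _ = C := mul_one C

end Stmt6Aux

section Stmt6Aux2
open scoped NNReal
variable {V : Type*} {𝕂 : Type*} [RCLike 𝕂]

/-- If the supremum `M` is finite, `B` preserves `c₀`. -/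
lemma stmt6_c0_pres (t : DirTree V) (lam μ : V → 𝕂) (hμ : ∀ v, μ v ≠ 0)
    (hM : (⨆ v : V, (‖μ v‖₊ : ℝ≥0∞) *
      ∑' u : t.children v, (‖lam u.1‖₊ : ℝ≥0∞) * (‖μ u.1‖₊ : ℝ≥0∞)⁻¹) ≠ ∞)
    (f : V → 𝕂) (hf : MemC0 μ f) : MemC0 μ (t.bshift lam f) := by
  set M := ⨆ v : V, (‖μ v‖₊ : ℝ≥0∞) *
      ∑' u : t.children v, (‖lam u.1‖₊ : ℝ≥0∞) * (‖μ u.1‖₊ : ℝ≥0∞)⁻¹ with hMdef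
  rw [MemC0, Metric.tendsto_nhds]
  intro ε hε
  set εn : ℝ≥0 := ε.toNNReal with hεn
  have hεn0 : 0 < εn := Real.toNNReal_pos.2 hε
  set a : ℝ≥0 := M.toNNReal with ha
  set δ : ℝ≥0 := εn / (a + 1) with hδ
  have hδ0 : 0 < δ := by positivity
  have hMδ : M * (δ : ℝ≥0∞) < (εn : ℝ≥0∞) := by
    have hM' : M = (a : ℝ≥0∞) := (ENNReal.coe_toNNReal hM).symm
    rw [hM', ← ENNReal.coe_mul, ENNReal.coe_lt_coe, hδ, ← NNReal.coe_lt_coe]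
    push_cast
    have hεr : (0:ℝ) < εn := hεn0
    have har : (0:ℝ) ≤ a := a.coe_nonneg
    have ha1 : (0:ℝ) < (a:ℝ) + 1 := by positivity
    rw [mul_div_assoc', div_lt_iff₀ ha1]
    nlinarith
  have hA : {u | ¬ ‖μ u * f u‖ < (δ : ℝ)}.Finite :=
    eventually_cofinite.1 (hf.eventually (gt_mem_nhds (show (0:ℝ) < δ from hδ0)))
  set A := {u | ¬ ‖μ u * f u‖ < (δ : ℝ)} with hAdef
  have hP : (some ⁻¹' (t.par '' A) : Set V).Finite :=
    (hA.image t.par).preimage (Set.injOn_of_injective (Option.some_injective V))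
  filter_upwards [hP.compl_mem_cofinite] with v hv
  rw [Real.dist_0_eq_abs, abs_of_nonneg (norm_nonneg _)]
  have hb : ∀ u ∈ t.children v, (‖μ u * f u‖₊ : ℝ≥0∞) ≤ (δ : ℝ≥0∞) := by
    intro u hu
    have huA : u ∉ A := by
      intro huA
      exact hv ⟨u, huA, hu⟩
    simp only [hAdef, Set.mem_setOf_eq, not_not] at huA
    rw [ENNReal.coe_le_coe]
    exact_mod_cast huA.le
  have hkey := stmt6_key t lam μ hμ f v (δ : ℝ≥0∞) hb
  have hlt : (‖μ v * t.bshift lam f v‖₊ : ℝ≥0∞) < (εn : ℝ≥0∞) :=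
    lt_of_le_of_lt (hkey.trans (mul_le_mul_left
      (le_iSup (fun v => (‖μ v‖₊ : ℝ≥0∞) *
        ∑' u : t.children v, (‖lam u.1‖₊ : ℝ≥0∞) * (‖μ u.1‖₊ : ℝ≥0∞)⁻¹) v) _)) hMδ
  rw [ENNReal.coe_lt_coe] at hlt
  have : ‖μ v * t.bshift lam f v‖ < (εn : ℝ) := hlt
  rwa [hεn, Real.coe_toNNReal ε hε.le] at this

end Stmt6Aux2

/-- `B_λ` is bounded on `ℓ^∞(V,μ)` iff it is bounded on `c₀(V,μ)` iff
`sup_v |μ_v| ∑_{u ∈ Chi(v)} |λ_u/μ_u| < ∞`; in that case `‖B_λ‖` equals this supremum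
on both spaces. -/
theorem stmt6 {V : Type*} [Countable V] {𝕂 : Type*} [RCLike 𝕂] (t : DirTree V)
    (lam μ : V → 𝕂) (hlam : ∀ v, lam v ≠ 0) (hμ : ∀ v, μ v ≠ 0) :
    (BoundedOn (t.bshift lam) (enormW μ ∞) ↔ BoundedOnC0 μ (t.bshift lam)) ∧
    (BoundedOn (t.bshift lam) (enormW μ ∞) ↔
      (⨆ v : V, (‖μ v‖₊ : ℝ≥0∞) *
          ∑' u : t.children v, (‖lam u.1‖₊ : ℝ≥0∞) * (‖μ u.1‖₊ : ℝ≥0∞)⁻¹) ≠ ∞) ∧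
    (BoundedOn (t.bshift lam) (enormW μ ∞) →
      opNorm (t.bshift lam) (enormW μ ∞)
          = (⨆ v : V, (‖μ v‖₊ : ℝ≥0∞) *
              ∑' u : t.children v, (‖lam u.1‖₊ : ℝ≥0∞) * (‖μ u.1‖₊ : ℝ≥0∞)⁻¹) ∧
      opNormC0 μ (t.bshift lam)
          = ⨆ v : V, (‖μ v‖₊ : ℝ≥0∞) *
              ∑' u : t.children v, (‖lam u.1‖₊ : ℝ≥0∞) * (‖μ u.1‖₊ : ℝ≥0∞)⁻¹) := by
  set M := ⨆ v : V, (‖μ v‖₊ : ℝ≥0∞) *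
      ∑' u : t.children v, (‖lam u.1‖₊ : ℝ≥0∞) * (‖μ u.1‖₊ : ℝ≥0∞)⁻¹ with hMdef
  have hball := stmt6_bound_all t lam μ hμ
  have hMle : ∀ C, (∀ f, MemC0 μ f → enormW μ ∞ (t.bshift lam f) ≤ C * enormW μ ∞ f) →
      M ≤ C := fun C hC => stmt6_M_le t lam μ hlam hμ C hC
  refine ⟨⟨?_, ?_⟩, ⟨?_, ?_⟩, ?_⟩
  · rintro ⟨C, hC, h⟩
    have hM : M ≠ ∞ := ne_top_of_le_ne_top hC (hMle C fun f _ => h f)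
    exact ⟨stmt6_c0_pres t lam μ hμ hM, M, hM, fun f _ => hball f⟩
  · rintro ⟨-, C, hC, h⟩
    have hM : M ≠ ∞ := ne_top_of_le_ne_top hC (hMle C h)
    exact ⟨M, hM, hball⟩
  · rintro ⟨C, hC, h⟩
    exact ne_top_of_le_ne_top hC (hMle C fun f _ => h f)
  · intro hM
    exact ⟨M, hM, hball⟩
  · rintro ⟨C, hC, h⟩
    constructor
    · refine le_antisymm (sInf_le ?_) (le_sInf fun C' hC' => hMle C' fun f _ => hC' f)
      exact hball
    · refine le_antisymm (sInf_le ?_) (le_sInf fun C' hC' => hMle C' hC')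
      exact fun f _ => hball f
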